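/- Let B_n be the 2x2 matrix with entries b11 = n, b12 = b21 = n(n+1)/2, b22 = n(n+1)(2n+1)/6, and let \lambda_{max}(n), \lambda_{min}(n) be its eigenvalues. Then (\lambda_{max}(n)/\lambda_{min}(n))/n^2 tends to 4/3 as n \to \infty. -/

import Mathlib

open Finset Real Filter

noncomputable def B (n : ℕ) : Matrix (Fin 2) (Fin 2) ℝ :=
  !![(n:ℝ), n*(n+1)/2; n*(n+1)/2, n*(n+1)*(2*n+1)/6]

lemma hB (n : ℕ) : (B n).IsHermitian := by
  show (B n).conjTranspose = B n
  ext i j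
  fin_cases i <;> fin_cases j <;> simp [B]

noncomputable def lmaxB (n : ℕ) : ℝ := max ((hB n).eigenvalues 0) ((hB n).eigenvalues 1)
noncomputable def lminB (n : ℕ) : ℝ := min ((hB n).eigenvalues 0) ((hB n).eigenvalues 1)

noncomputable def TT (n : ℕ) : ℝ := (n:ℝ) + n*(n+1)*(2*n+1)/6
noncomputable def DD (n : ℕ) : ℝ := (n:ℝ)^2*((n:ℝ)^2-1)/12

lemma eig_sum (n : ℕ) : (hB n).eigenvalues 0 + (hB n).eigenvalues 1 = TT n := by
  have h : (B n).trace = ∑ i, (hB n).eigenvalues i := by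
    rw [(hB n).trace_eq_sum_eigenvalues]
    simp
  rw [Fin.sum_univ_two] at h
  rw [← h]
  simp [Matrix.trace_fin_two, B, TT]

lemma eig_prod (n : ℕ) : (hB n).eigenvalues 0 * (hB n).eigenvalues 1 = DD n := by
  have h := (hB n).det_eq_prod_eigenvalues
  rw [Fin.prod_univ_two] at h
  simp only [RCLike.ofReal_real_eq_id, id] at h
  rw [← h]
  rw [Matrix.det_fin_two]
  simp [B, DD]
  ring

lemma disc_nonneg (n : ℕ) : 0 ≤ TT n ^ 2 - 4 * DD n := by
  have h : TT n ^ 2 - 4 * DD n = ((hB n).eigenvalues 0 - (hB n).eigenvalues 1)^2 := by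
    rw [← eig_sum n, ← eig_prod n]; ring
  rw [h]; positivity

lemma sqrt_disc (n : ℕ) :
    Real.sqrt (TT n ^ 2 - 4 * DD n) = |(hB n).eigenvalues 0 - (hB n).eigenvalues 1| := by
  have h : TT n ^ 2 - 4 * DD n = ((hB n).eigenvalues 0 - (hB n).eigenvalues 1)^2 := by
    rw [← eig_sum n, ← eig_prod n]; ring
  rw [h, Real.sqrt_sq_eq_abs]

lemma lmax_eq (n : ℕ) : lmaxB n = (TT n + Real.sqrt (TT n ^ 2 - 4 * DD n)) / 2 := by
  rw [lmaxB, sqrt_disc n, ← eig_sum n]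
  rcases le_total ((hB n).eigenvalues 0) ((hB n).eigenvalues 1) with h | h
  · rw [max_eq_right h, abs_of_nonpos (by linarith)]; ring
  · rw [max_eq_left h, abs_of_nonneg (by linarith)]; ring

lemma lmin_eq (n : ℕ) : lminB n = (TT n - Real.sqrt (TT n ^ 2 - 4 * DD n)) / 2 := by
  rw [lminB, sqrt_disc n, ← eig_sum n]
  rcases le_total ((hB n).eigenvalues 0) ((hB n).eigenvalues 1) with h | h
  · rw [min_eq_left h, abs_of_nonpos (by linarith)]; ring
  · rw [min_eq_right h, abs_of_nonneg (by linarith)]; ring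

/-- Theorem 2: `cond₂(B n) = λmax/λmin ∼ (4/3) n²`. -/
theorem cond_Bn_asymp :
    Filter.Tendsto (fun n : ℕ => (lmaxB n / lminB n) / (n : ℝ)^2)
      Filter.atTop (nhds (4/3)) := by
  have h0 : Tendsto (fun n : ℕ => 1/(n:ℝ)) atTop (nhds 0) :=
    tendsto_one_div_atTop_nhds_zero_nat
  -- limits of normalized trace and determinant
  have ht : Tendsto (fun n : ℕ => TT n / (n:ℝ)^3) atTop (nhds (1/3)) := by
    have h1 : Tendsto (fun n : ℕ => (1/(n:ℝ))^2 + (1+1/(n:ℝ))*(2+1/(n:ℝ))/6) atTop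
        (nhds (0^2 + (1+0)*(2+0)/6)) := by
      exact ((h0.pow 2).add (((h0.const_add 1).mul (h0.const_add 2)).div_const 6))
    have h2 : (0:ℝ)^2 + (1+0)*(2+0)/6 = 1/3 := by norm_num
    rw [h2] at h1
    refine h1.congr' ?_
    filter_upwards [eventually_ge_atTop 1] with n hn
    have hn' : (n:ℝ) ≠ 0 := by positivity
    field_simp [TT]
    simp only [TT]
    ring
  have hd : Tendsto (fun n : ℕ => DD n / (n:ℝ)^4) atTop (nhds (1/12)) := by
    have h1 : Tendsto (fun n : ℕ => (1 - (1/(n:ℝ))^2)/12) atTop (nhds ((1-0^2)/12)) :=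
      ((h0.pow 2).const_sub 1).div_const 12
    have h2 : ((1:ℝ)-0^2)/12 = 1/12 := by norm_num
    rw [h2] at h1
    refine h1.congr' ?_
    filter_upwards [eventually_ge_atTop 1] with n hn
    have hn' : (n:ℝ) ≠ 0 := by positivity
    field_simp [DD]
    simp only [DD]
    ring
  have hr : Tendsto (fun n : ℕ => Real.sqrt (TT n ^ 2 - 4 * DD n) / (n:ℝ)^3) atTop
      (nhds (1/3)) := by
    have h1 : Tendsto (fun n : ℕ => Real.sqrt ((TT n / (n:ℝ)^3)^2
        - 4 * (DD n / (n:ℝ)^4) * (1/(n:ℝ))^2)) atTop (nhds (Real.sqrt ((1/3)^2 - 4*(1/12)*0^2))) := by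
      exact ((ht.pow 2).sub (((hd.const_mul 4)).mul (h0.pow 2))).sqrt
    have h2 : Real.sqrt ((1/3:ℝ)^2 - 4*(1/12)*0^2) = 1/3 := by
      rw [show ((1/3:ℝ)^2 - 4*(1/12)*0^2) = (1/3)^2 by norm_num]
      rw [Real.sqrt_sq (by norm_num)]
    rw [h2] at h1
    refine h1.congr' ?_
    filter_upwards [eventually_ge_atTop 1] with n hn
    have hn' : (0:ℝ) < (n:ℝ) := by exact_mod_cast hn
    have e1 : (TT n / (n:ℝ)^3)^2 - 4 * (DD n / (n:ℝ)^4) * (1/(n:ℝ))^2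
        = (TT n ^ 2 - 4 * DD n) / ((n:ℝ)^3)^2 := by
      field_simp
    rw [e1, Real.sqrt_div (disc_nonneg n), Real.sqrt_sq (by positivity)]
  -- the combination
  have hmain : Tendsto (fun n : ℕ =>
      (TT n / (n:ℝ)^3 + Real.sqrt (TT n ^ 2 - 4 * DD n) / (n:ℝ)^3)^2
        / (4 * (DD n / (n:ℝ)^4))) atTop (nhds (((1/3+1/3:ℝ)^2) / (4*(1/12)))) := by
    exact ((ht.add hr).pow 2).div (hd.const_mul 4) (by norm_num)
  have h2 : ((1/3+1/3:ℝ)^2) / (4*(1/12)) = 4/3 := by norm_num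
  rw [h2] at hmain
  refine hmain.congr' ?_
  filter_upwards [eventually_ge_atTop 2] with n hn
  have hn' : (2:ℝ) ≤ (n:ℝ) := by exact_mod_cast hn
  have hnpos : (0:ℝ) < (n:ℝ) := by linarith
  set T := TT n with hT
  set D := DD n with hD
  set R := Real.sqrt (T ^ 2 - 4 * D) with hRdef
  have hDpos : 0 < D := by
    rw [hD, DD]
    have : (1:ℝ) < (n:ℝ)^2 := by nlinarith
    have : (0:ℝ) < (n:ℝ)^2 := by positivity
    nlinarith
  have hTpos : 0 < T := by
    rw [hT, TT]
    positivity
  have hR0 : 0 ≤ R := Real.sqrt_nonneg _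
  have hR2 : R^2 = T^2 - 4*D := Real.sq_sqrt (disc_nonneg n)
  have hRltT : R < T := by
    nlinarith
  have key : (T - R) * (T + R) = 4 * D := by nlinarith
  rw [lmax_eq n, lmin_eq n, ← hT, ← hD, ← hRdef]
  have hTRpos : 0 < T - R := by linarith
  have hTRppos : 0 < T + R := by linarith
  have e1 : (T + R)/2 / ((T - R)/2) = (T + R)^2 / (4*D) := by
    rw [div_div_div_cancel_right₀, div_eq_div_iff hTRpos.ne' (by positivity : (4*D) ≠ 0)]
    · linear_combination (T+R) * hR2
    · norm_num
  rw [e1]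
  have hn0 : (n:ℝ) ≠ 0 := hnpos.ne'
  field_simp
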